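/- arXiv:1804.03710 — 2 statements merged into one kernel-verified Lean document; each statement's English description precedes it below -/
import Mathlib

section
/- Let i be in {1,...,n}, let lambda in a_Z* satisfy <lambda+rho, alpha_i^v> > l and <lambda+rho, alpha_i^v> not a multiple of l, and let nu in a_Z* satisfy <nu, alpha_i^v> >= 0. Then the element |l*s_i(nu) + s_i∘lambda> + |l*nu + s_i∘lambda> + t^{1/2}|l*s_i(nu) + s_i∘lambda^{(1)}> + t^{1/2}|l*nu + s_i∘lambda^{(1)}> + |l*s_i(nu) + lambda^{(1)}> + |l*nu + lambda^{(1)}> + t^{1/2}|l*s_i(nu) + lambda> + t^{1/2}|l*nu + lambda> of V belongs to I, where lambda^{(1)} is taken relative to i. (Case 3 of the proof of Proposition 1.1) -/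
open Finsupp LaurentPolynomial

noncomputable section

/-- The ring `K = ℤ[t^{1/2}, t^{-1/2}]`: Laurent polynomials over `ℤ` in the
variable `T = t^{1/2}`. -/
abbrev K : Type := LaurentPolynomial ℤ

/-- The element `t^{1/2}` of `K`. -/
def tHalf : K := T 1

/-- The bar involution of `K`, determined by `t^{1/2} ↦ t^{-1/2}`. -/
def conjK : K →+* K := (LaurentPolynomial.invert (R := ℤ)).toRingHom

/-- `V`: the free `K`-module with basis `{|λ⟩ : λ ∈ a_ℤ^*}` indexed by the weight
lattice `Λ`. -/
abbrev V (Λ : Type) : Type := Λ →₀ K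

/-- The basis element `|λ⟩` of `V`. -/
def ket {Λ : Type} (lam : Λ) : V Λ := Finsupp.single lam 1

/-- The data of (the weight lattice of) a reduced finite crystallographic root
system: the weight lattice `Λ = a_ℤ^*`, the (finite) Weyl group `W = W₀` acting
on `Λ` through `σ`, the simple reflections `s i`, the simple roots `α i`, the
pairings `pair i = ⟨·, α_i^∨⟩` with the simple coroots, the finite set
`posRoots` of pairings `⟨·, α^∨⟩` with the coroots `α^∨` of the positive roots
`α ∈ R⁺`, the half-sum `ρ` of the positive roots (assumed to lie in `Λ`), the
longest element `w0` (of length `posRoots.card`), and the sign character `det`. -/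
structure RootData (Λ W : Type) [AddCommGroup Λ] [Group W] [Fintype W] where
  n : ℕ
  σ : W →* Multiplicative (AddAut Λ)
  s : Fin n → W
  α : Fin n → Λ
  pair : Fin n → Λ →+ ℤ
  posRoots : Finset (Λ →+ ℤ)
  ρ : Λ
  w0 : W
  det : W →* ℤˣ
  /-- `s i` acts on `Λ` as the reflection in the simple root `α i`. -/
  reflect : ∀ (i : Fin n) (lam : Λ), (σ (s i)).toAdd lam = lam - pair i lam • α i
  /-- crystallographic normalization `⟨α_i, α_i^∨⟩ = 2`. -/
  pair_alpha_self : ∀ i : Fin n, pair i (α i) = 2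
  /-- the simple reflections are involutions. -/
  s_sq : ∀ i : Fin n, s i * s i = 1
  /-- `W₀` is generated by the simple reflections. -/
  gen_s : Subgroup.closure (Set.range s) = ⊤
  /-- `⟨ρ, α_i^∨⟩ = 1` for every simple coroot. -/
  pair_rho : ∀ i : Fin n, pair i ρ = 1
  /-- each simple coroot is the coroot of a positive root. -/
  pair_mem : ∀ i : Fin n, pair i ∈ posRoots
  /-- the Weyl group permutes the (co)roots up to sign. -/
  roots_perm : ∀ (w : W), ∀ f ∈ posRoots,
    (∃ g ∈ posRoots, ∀ lam, f ((σ w).toAdd lam) = g lam) ∨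
    (∃ g ∈ posRoots, ∀ lam, f ((σ w).toAdd lam) = - g lam)
  /-- `w0` sends every positive root to a negative root (so `w0` is the longest
  element, of length `posRoots.card`). -/
  w0_neg : ∀ f ∈ posRoots, ∃ g ∈ posRoots, ∀ lam, f ((σ w0).toAdd lam) = - g lam
  /-- `det` is the sign character. -/
  det_s : ∀ i : Fin n, det (s i) = -1

namespace RootData

variable {Λ W : Type} [AddCommGroup Λ] [Group W] [Fintype W]

/-- The dot action `w ∘ λ = w(λ + ρ) - ρ`. -/
def dot (D : RootData Λ W) (w : W) (lam : Λ) : Λ := (D.σ w).toAdd (lam + D.ρ) - D.ρ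

/-- `λ^{(1)} = λ - j • α_i`, where `⟨λ + ρ, α_i^∨⟩ = k l + j` with `j ∈ {0, …, l-1}`
(relative to the index `i`). -/
def lamOne (D : RootData Λ W) (l : ℕ) (i : Fin D.n) (lam : Λ) : Λ :=
  lam - (D.pair i (lam + D.ρ) % (l : ℤ)) • D.α i

/-- A weight `λ` is dominant when `⟨λ + ρ, α_i^∨⟩ > 0` for all `i`. -/
def dominant (D : RootData Λ W) (lam : Λ) : Prop :=
  ∀ i : Fin D.n, 0 < D.pair i (lam + D.ρ)

/-- `λ₀ ∈ Π_l`: an `l`-restricted dominant weight. -/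
def restricted (D : RootData Λ W) (l : ℕ) (lam : Λ) : Prop :=
  D.dominant lam ∧ ∀ i : Fin D.n, D.pair i lam ≤ (l : ℤ) - 1

/-- The `K`-submodule `I` of `V` spanned by the straightening elements
(a), (b), (c). -/
def Idl (D : RootData Λ W) (l : ℕ) : Submodule K (V Λ) :=
  Submodule.span K
    ({x | ∃ (i : Fin D.n) (lam : Λ),
        (∃ k : ℤ, 0 ≤ k ∧ D.pair i (lam + D.ρ) = k * l) ∧
        x = ket (D.dot (D.s i) lam) + ket lam} ∪
     {x | ∃ (i : Fin D.n) (lam : Λ),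
        0 < D.pair i (lam + D.ρ) ∧ D.pair i (lam + D.ρ) < (l : ℤ) ∧
        x = ket (D.dot (D.s i) lam) + tHalf • ket lam} ∪
     {x | ∃ (i : Fin D.n) (lam : Λ),
        (l : ℤ) < D.pair i (lam + D.ρ) ∧ ¬ ((l : ℤ) ∣ D.pair i (lam + D.ρ)) ∧
        x = ket (D.dot (D.s i) lam) + tHalf • ket (D.dot (D.s i) (D.lamOne l i lam)) +
            ket (D.lamOne l i lam) + tHalf • ket lam})

/-- The operator `X^μ · : V → V` of the level `-(l+h)` action:
`X^μ · |γ⟩ = |γ - l w0(μ)⟩`. -/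
def opX (D : RootData Λ W) (l : ℕ) (mu : Λ) : V Λ →ₗ[K] V Λ :=
  Finsupp.lmapDomain K K (fun gam => gam - l • (D.σ D.w0).toAdd mu)

/-- The level `-(l+h)` action of an element `g` of the group algebra `K[X]`
(with `K`-coefficients) on `V`. -/
def actKX (D : RootData Λ W) (l : ℕ) (g : Λ →₀ K) (v : V Λ) : V Λ :=
  g.sum fun mu c => c • (D.opX l mu v)

/-- The level `-(l+h)` action of an element `g` of `ℤ[X]` on `V`. -/
def actZX (D : RootData Λ W) (l : ℕ) (g : Λ →₀ ℤ) (v : V Λ) : V Λ :=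
  g.sum fun mu c => c • (D.opX l mu v)

/-- `N_λ = #{α ∈ R⁺ : ⟨λ + ρ, α^∨⟩ ∈ lℤ}`. -/
def Ncount (D : RootData Λ W) (l : ℕ) (lam : Λ) : ℕ :=
  (D.posRoots.filter (fun f => (l : ℤ) ∣ f (lam + D.ρ))).card

/-- The coefficient `(-1)^{l(w0)} (t^{-1/2})^{l(w0) - N_λ}` appearing in the bar
involution, where `l(w0) = Card R⁺`. -/
def barCoef (D : RootData Λ W) (l : ℕ) (lam : Λ) : K :=
  ((-1 : K) ^ D.posRoots.card) * T ((D.Ncount l lam : ℤ) - (D.posRoots.card : ℤ))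

/-- The bar involution of `V`:
`bar(c|λ⟩) = c̄ (-1)^{l(w0)} (t^{-1/2})^{l(w0)-N_λ} |w0 ∘ λ⟩`. -/
def barV (D : RootData Λ W) (l : ℕ) (v : V Λ) : V Λ :=
  v.sum fun lam c => (conjK c * D.barCoef l lam) • ket (D.dot D.w0 lam)

/-- `V⁺`: the `ℤ[t^{1/2}]`-span of the `|μ⟩` inside `V`, i.e. the elements all
of whose coefficients are polynomials in `t^{1/2}`. -/
def inVplus {Λ : Type} (b : V Λ) : Prop :=
  ∀ (mu : Λ) (m : ℤ), m < 0 → (b mu).coeff m = 0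

/-- Membership in `I + t^{1/2} V⁺`. -/
def inIplus (D : RootData Λ W) (l : ℕ) (x : V Λ) : Prop :=
  ∃ a ∈ D.Idl l, ∃ b : V Λ, inVplus b ∧ x = a + tHalf • b

/-- The Weyl numerator `∑_{w ∈ W₀} det(w) X^{w ν}` in `K[X]`. -/
def weylNumer (D : RootData Λ W) (nu : Λ) : AddMonoidAlgebra K Λ :=
  ∑ w : W, ((D.det w : ℤˣ) : ℤ) • AddMonoidAlgebra.single ((D.σ w).toAdd nu) (1 : K)

/-- `g` is the Weyl character `s_ν ∈ ℤ[X]^{W₀} ⊆ K[X]`: it has integer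
coefficients, is `W₀`-invariant, and satisfies the Weyl character formula
`(∑_w det(w) X^{wρ}) · s_ν = ∑_w det(w) X^{w(ν+ρ)}`. -/
def IsWeylChar (D : RootData Λ W) (nu : Λ) (g : AddMonoidAlgebra K Λ) : Prop :=
  (∀ mu : Λ, ∃ z : ℤ, g.coeff mu = (z : K)) ∧
  (∀ (w : W) (mu : Λ), g.coeff ((D.σ w).toAdd mu) = g.coeff mu) ∧
  D.weylNumer D.ρ * g = D.weylNumer (nu + D.ρ)

end RootData

end

set_option maxHeartbeats 2000000 in
/-- Case 3 of the proof of Proposition 1.1: if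
`⟨λ+ρ, α_i^∨⟩ > l`, `⟨λ+ρ, α_i^∨⟩ ∉ lℤ`, and `⟨ν, α_i^∨⟩ ≥ 0`, then
`|l s_iν + s_i∘λ⟩ + |lν + s_i∘λ⟩ + t^{1/2}|l s_iν + s_i∘λ^{(1)}⟩ +
 t^{1/2}|lν + s_i∘λ^{(1)}⟩ + |l s_iν + λ^{(1)}⟩ + |lν + λ^{(1)}⟩ +
 t^{1/2}|l s_iν + λ⟩ + t^{1/2}|lν + λ⟩ ∈ I`. -/
theorem statement3 {Λ W : Type} [AddCommGroup Λ] [Group W] [Fintype W]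
    (D : RootData Λ W) (l : ℕ) (hl : 0 < l) (i : Fin D.n) (lam nu : Λ)
    (h1 : (l : ℤ) < D.pair i (lam + D.ρ))
    (h2 : ¬ ((l : ℤ) ∣ D.pair i (lam + D.ρ)))
    (hnu : 0 ≤ D.pair i nu) :
    ket (l • (D.σ (D.s i)).toAdd nu + D.dot (D.s i) lam) +
      ket (l • nu + D.dot (D.s i) lam) +
      tHalf • ket (l • (D.σ (D.s i)).toAdd nu + D.dot (D.s i) (D.lamOne l i lam)) +
      tHalf • ket (l • nu + D.dot (D.s i) (D.lamOne l i lam)) +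
      ket (l • (D.σ (D.s i)).toAdd nu + D.lamOne l i lam) +
      ket (l • nu + D.lamOne l i lam) +
      tHalf • ket (l • (D.σ (D.s i)).toAdd nu + lam) +
      tHalf • ket (l • nu + lam) ∈ D.Idl l := by
  classical
  have hl' : (0:ℤ) < (l:ℤ) := by exact_mod_cast hl
  obtain ⟨p, hp⟩ : ∃ p, D.pair i (lam + D.ρ) = p := ⟨_, rfl⟩
  obtain ⟨q, hq⟩ : ∃ q, D.pair i nu = q := ⟨_, rfl⟩
  rw [hp] at h1 h2
  rw [hq] at hnu
  obtain ⟨j, hj⟩ : ∃ j, p % (l:ℤ) = j := ⟨_, rfl⟩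
  have hj0 : 0 < j := by
    rcases lt_or_eq_of_le (Int.emod_nonneg p hl'.ne') with h | h
    · rwa [hj] at h
    · exact absurd (Int.dvd_of_emod_eq_zero h.symm) h2
  have hjl : j < (l:ℤ) := hj ▸ Int.emod_lt_of_pos p hl'
  obtain ⟨c, hc⟩ : ∃ c, p - j = (l:ℤ) * c := by
    refine ⟨p / (l:ℤ), ?_⟩
    have h := Int.emod_add_mul_ediv p (l:ℤ)
    rw [hj] at h
    linarith
  have hdotgen : ∀ x : Λ, D.dot (D.s i) x = x - D.pair i (x + D.ρ) • D.α i := by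
    intro x
    simp only [RootData.dot, D.reflect]
    abel
  have hpairsub : ∀ (y : Λ) (cc : ℤ),
      D.pair i (y - cc • D.α i + D.ρ) = D.pair i (y + D.ρ) - 2 * cc := by
    intro y cc
    rw [show y - cc • D.α i + D.ρ = y + D.ρ - cc • D.α i from by abel,
      map_sub, map_zsmul, D.pair_alpha_self, smul_eq_mul]
    ring
  have hpairmu : D.pair i (l • nu + lam + D.ρ) = (l:ℤ) * q + p := by
    rw [show l • nu + lam + D.ρ = l • nu + (lam + D.ρ) from by abel,
      map_add, map_nsmul, hq, hp, nsmul_eq_mul]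
  have hpc : ∀ cc : ℤ,
      D.pair i (l • nu + lam - cc • D.α i + D.ρ) = (l:ℤ) * q + p - 2 * cc := by
    intro cc; rw [hpairsub, hpairmu]
  have hsnu' : (D.σ (D.s i)).toAdd nu = nu - q • D.α i := by
    rw [D.reflect, hq]
  have hdlam : D.dot (D.s i) lam = lam - p • D.α i := by
    rw [hdotgen, hp]
  have hLlam : D.lamOne l i lam = lam - j • D.α i := by
    simp only [RootData.lamOne]
    rw [hp, hj]
  have hdLlam : D.dot (D.s i) (D.lamOne l i lam) = lam - (p - j) • D.α i := by
    rw [hLlam, hdotgen, hpairsub, hp]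
    module
  have hmodmu : ((l:ℤ) * q + p) % (l:ℤ) = j := by
    rw [show (l:ℤ) * q + p = p + (l:ℤ) * q from by ring, Int.add_mul_emod_self_left]
    exact hj
  have hdmu : D.dot (D.s i) (l • nu + lam) = l • nu + lam - ((l:ℤ) * q + p) • D.α i := by
    rw [hdotgen, hpairmu]
  have hLmu : D.lamOne l i (l • nu + lam) = l • nu + lam - j • D.α i := by
    simp only [RootData.lamOne]
    rw [hpairmu, hmodmu]
  have hdLmu : D.dot (D.s i) (D.lamOne l i (l • nu + lam)) =
      l • nu + lam - ((l:ℤ) * q + (p - j)) • D.α i := by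
    rw [hLmu, hdotgen, hpc]
    module
  have eT1 : l • (D.σ (D.s i)).toAdd nu + D.dot (D.s i) lam
      = l • nu + lam - ((l:ℤ) * q + p) • D.α i := by
    rw [hsnu', hdlam]; simp only [← natCast_zsmul]; module
  have eT2 : l • nu + D.dot (D.s i) lam = l • nu + lam - p • D.α i := by
    rw [hdlam]; simp only [← natCast_zsmul]; module
  have eT3 : l • (D.σ (D.s i)).toAdd nu + D.dot (D.s i) (D.lamOne l i lam)
      = l • nu + lam - ((l:ℤ) * q + (p - j)) • D.α i := by
    rw [hsnu', hdLlam]; simp only [← natCast_zsmul]; module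
  have eT4 : l • nu + D.dot (D.s i) (D.lamOne l i lam)
      = l • nu + lam - (p - j) • D.α i := by
    rw [hdLlam]; simp only [← natCast_zsmul]; module
  have eT5 : l • (D.σ (D.s i)).toAdd nu + D.lamOne l i lam
      = l • nu + lam - ((l:ℤ) * q + j) • D.α i := by
    rw [hsnu', hLlam]; simp only [← natCast_zsmul]; module
  have eT6 : l • nu + D.lamOne l i lam = l • nu + lam - j • D.α i := by
    rw [hLlam]; simp only [← natCast_zsmul]; module
  have eT7 : l • (D.σ (D.s i)).toAdd nu + lam = l • nu + lam - ((l:ℤ) * q) • D.α i := by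
    rw [hsnu']; simp only [← natCast_zsmul]; module
  have hmodA : ((l:ℤ) * q + p - 2 * ((l:ℤ) * q)) % (l:ℤ) = j := by
    rw [show (l:ℤ) * q + p - 2 * ((l:ℤ) * q) = j + (l:ℤ) * (c - q) from by
      rw [mul_sub]; linarith, Int.add_mul_emod_self_left]
    exact Int.emod_eq_of_lt hj0.le hjl
  have hdzA : D.dot (D.s i) (l • nu + lam - ((l:ℤ) * q) • D.α i)
      = l • nu + lam - p • D.α i := by
    rw [hdotgen, hpc]; simp only [← natCast_zsmul]; module
  have hLzA : D.lamOne l i (l • nu + lam - ((l:ℤ) * q) • D.α i)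
      = l • nu + lam - ((l:ℤ) * q + j) • D.α i := by
    simp only [RootData.lamOne]
    rw [hpc, hmodA]; simp only [← natCast_zsmul]; module
  have hdLzA : D.dot (D.s i) (D.lamOne l i (l • nu + lam - ((l:ℤ) * q) • D.α i))
      = l • nu + lam - (p - j) • D.α i := by
    rw [hLzA, hdotgen, hpc]; simp only [← natCast_zsmul]; module
  have hmodC : ((l:ℤ) * q + p - 2 * (p - j)) % (l:ℤ) = j := by
    rw [show (l:ℤ) * q + p - 2 * (p - j) = j + (l:ℤ) * (q - c) from by
      rw [mul_sub]; linarith, Int.add_mul_emod_self_left]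
    exact Int.emod_eq_of_lt hj0.le hjl
  have hdzC : D.dot (D.s i) (l • nu + lam - (p - j) • D.α i)
      = l • nu + lam - ((l:ℤ) * q + j) • D.α i := by
    rw [hdotgen, hpc]; simp only [← natCast_zsmul]; module
  have hLzC : D.lamOne l i (l • nu + lam - (p - j) • D.α i)
      = l • nu + lam - p • D.α i := by
    simp only [RootData.lamOne]
    rw [hpc, hmodC]; simp only [← natCast_zsmul]; module
  have hdLzC : D.dot (D.s i) (D.lamOne l i (l • nu + lam - (p - j) • D.α i))
      = l • nu + lam - ((l:ℤ) * q) • D.α i := by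
    rw [hLzC, hdotgen, hpc]; simp only [← natCast_zsmul]; module
  have condmu1 : (l:ℤ) < D.pair i (l • nu + lam + D.ρ) := by
    rw [hpairmu]
    nlinarith [mul_nonneg hl'.le hnu]
  have condmu2 : ¬ ((l:ℤ) ∣ D.pair i (l • nu + lam + D.ρ)) := by
    rw [hpairmu]
    rintro ⟨d, hd⟩
    exact h2 ⟨d - q, by rw [mul_sub]; linarith⟩
  rcases lt_trichotomy ((l:ℤ) * q) (p - j) with hlt | heq | hlt
  · -- Case A : l*q < p - j
    have hcq : q < c := by
      have hlc : (l:ℤ) * q < (l:ℤ) * c := by linarith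
      exact lt_of_mul_lt_mul_left hlc hl'.le
    have h5 : (l:ℤ) * q + (l:ℤ) ≤ (l:ℤ) * c := by
      have h := mul_le_mul_of_nonneg_left (show q + 1 ≤ c by linarith) hl'.le
      rw [mul_add, mul_one] at h
      linarith
    have condA1 : (l:ℤ) < D.pair i (l • nu + lam - ((l:ℤ) * q) • D.α i + D.ρ) := by
      rw [hpc]; linarith
    have condA2 : ¬ ((l:ℤ) ∣ D.pair i (l • nu + lam - ((l:ℤ) * q) • D.α i + D.ρ)) := by
      rw [hpc]
      rintro ⟨d, hd⟩
      have hjj : j = (l:ℤ) * (d + q - c) := by rw [mul_sub, mul_add]; linarith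
      rcases le_or_gt (d + q - c) 0 with he | he
      · have hle : (l:ℤ) * (d + q - c) ≤ (l:ℤ) * 0 := mul_le_mul_of_nonneg_left he hl'.le
        rw [mul_zero] at hle
        linarith
      · have hle : (l:ℤ) * 1 ≤ (l:ℤ) * (d + q - c) :=
          mul_le_mul_of_nonneg_left (by linarith) hl'.le
        rw [mul_one] at hle
        linarith
    have key : ket (l • (D.σ (D.s i)).toAdd nu + D.dot (D.s i) lam) +
        ket (l • nu + D.dot (D.s i) lam) +
        tHalf • ket (l • (D.σ (D.s i)).toAdd nu + D.dot (D.s i) (D.lamOne l i lam)) +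
        tHalf • ket (l • nu + D.dot (D.s i) (D.lamOne l i lam)) +
        ket (l • (D.σ (D.s i)).toAdd nu + D.lamOne l i lam) +
        ket (l • nu + D.lamOne l i lam) +
        tHalf • ket (l • (D.σ (D.s i)).toAdd nu + lam) +
        tHalf • ket (l • nu + lam)
        = (ket (D.dot (D.s i) (l • nu + lam)) +
            tHalf • ket (D.dot (D.s i) (D.lamOne l i (l • nu + lam))) +
            ket (D.lamOne l i (l • nu + lam)) + tHalf • ket (l • nu + lam)) +
          (ket (D.dot (D.s i) (l • nu + lam - ((l:ℤ) * q) • D.α i)) +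
            tHalf • ket (D.dot (D.s i) (D.lamOne l i (l • nu + lam - ((l:ℤ) * q) • D.α i))) +
            ket (D.lamOne l i (l • nu + lam - ((l:ℤ) * q) • D.α i)) +
            tHalf • ket (l • nu + lam - ((l:ℤ) * q) • D.α i)) := by
      rw [eT1, eT2, eT3, eT4, eT5, eT6, eT7, hdmu, hdLmu, hLmu, hdzA, hdLzA, hLzA]
      module
    rw [key]
    exact Submodule.add_mem _
      (Submodule.subset_span (by exact Or.inr ⟨i, l • nu + lam, condmu1, condmu2, rfl⟩))
      (Submodule.subset_span (by exact Or.inr ⟨i, l • nu + lam - ((l:ℤ) * q) • D.α i, condA1, condA2, rfl⟩))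
  · -- Case B : l*q = p - j
    have condB1 : 0 < D.pair i (l • nu + lam - ((l:ℤ) * q) • D.α i + D.ρ) := by
      rw [hpc]; linarith
    have condB2 : D.pair i (l • nu + lam - ((l:ℤ) * q) • D.α i + D.ρ) < (l:ℤ) := by
      rw [hpc]; linarith
    have key : ket (l • (D.σ (D.s i)).toAdd nu + D.dot (D.s i) lam) +
        ket (l • nu + D.dot (D.s i) lam) +
        tHalf • ket (l • (D.σ (D.s i)).toAdd nu + D.dot (D.s i) (D.lamOne l i lam)) +
        tHalf • ket (l • nu + D.dot (D.s i) (D.lamOne l i lam)) +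
        ket (l • (D.σ (D.s i)).toAdd nu + D.lamOne l i lam) +
        ket (l • nu + D.lamOne l i lam) +
        tHalf • ket (l • (D.σ (D.s i)).toAdd nu + lam) +
        tHalf • ket (l • nu + lam)
        = (ket (D.dot (D.s i) (l • nu + lam)) +
            tHalf • ket (D.dot (D.s i) (D.lamOne l i (l • nu + lam))) +
            ket (D.lamOne l i (l • nu + lam)) + tHalf • ket (l • nu + lam)) +
          (2:K) • (ket (D.dot (D.s i) (l • nu + lam - ((l:ℤ) * q) • D.α i)) +
            tHalf • ket (l • nu + lam - ((l:ℤ) * q) • D.α i)) := by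
      rw [eT1, eT2, eT3, eT4, eT5, eT6, eT7, hdmu, hdLmu, hLmu, hdzA]
      rw [show (l:ℤ) * q + j = p from by linarith, show p - j = (l:ℤ) * q from heq.symm]
      module
    rw [key]
    exact Submodule.add_mem _
      (Submodule.subset_span (by exact Or.inr ⟨i, l • nu + lam, condmu1, condmu2, rfl⟩))
      (Submodule.smul_mem _ _ (Submodule.subset_span (by exact Or.inl (Or.inr ⟨i, l • nu + lam - ((l:ℤ) * q) • D.α i, condB1, condB2, rfl⟩))))
  · -- Case C : p - j < l*q
    have hcq : c < q := by
      have hlc : (l:ℤ) * c < (l:ℤ) * q := by linarith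
      exact lt_of_mul_lt_mul_left hlc hl'.le
    have h5 : (l:ℤ) * c + (l:ℤ) ≤ (l:ℤ) * q := by
      have h := mul_le_mul_of_nonneg_left (show c + 1 ≤ q by linarith) hl'.le
      rw [mul_add, mul_one] at h
      linarith
    have condC1 : (l:ℤ) < D.pair i (l • nu + lam - (p - j) • D.α i + D.ρ) := by
      rw [hpc]; linarith
    have condC2 : ¬ ((l:ℤ) ∣ D.pair i (l • nu + lam - (p - j) • D.α i + D.ρ)) := by
      rw [hpc]
      rintro ⟨d, hd⟩
      have hjj : j = (l:ℤ) * (d - q + c) := by rw [mul_add, mul_sub]; linarith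
      rcases le_or_gt (d - q + c) 0 with he | he
      · have hle : (l:ℤ) * (d - q + c) ≤ (l:ℤ) * 0 := mul_le_mul_of_nonneg_left he hl'.le
        rw [mul_zero] at hle
        linarith
      · have hle : (l:ℤ) * 1 ≤ (l:ℤ) * (d - q + c) :=
          mul_le_mul_of_nonneg_left (by linarith) hl'.le
        rw [mul_one] at hle
        linarith
    have key : ket (l • (D.σ (D.s i)).toAdd nu + D.dot (D.s i) lam) +
        ket (l • nu + D.dot (D.s i) lam) +
        tHalf • ket (l • (D.σ (D.s i)).toAdd nu + D.dot (D.s i) (D.lamOne l i lam)) +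
        tHalf • ket (l • nu + D.dot (D.s i) (D.lamOne l i lam)) +
        ket (l • (D.σ (D.s i)).toAdd nu + D.lamOne l i lam) +
        ket (l • nu + D.lamOne l i lam) +
        tHalf • ket (l • (D.σ (D.s i)).toAdd nu + lam) +
        tHalf • ket (l • nu + lam)
        = (ket (D.dot (D.s i) (l • nu + lam)) +
            tHalf • ket (D.dot (D.s i) (D.lamOne l i (l • nu + lam))) +
            ket (D.lamOne l i (l • nu + lam)) + tHalf • ket (l • nu + lam)) +
          (ket (D.dot (D.s i) (l • nu + lam - (p - j) • D.α i)) +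
            tHalf • ket (D.dot (D.s i) (D.lamOne l i (l • nu + lam - (p - j) • D.α i))) +
            ket (D.lamOne l i (l • nu + lam - (p - j) • D.α i)) +
            tHalf • ket (l • nu + lam - (p - j) • D.α i)) := by
      rw [eT1, eT2, eT3, eT4, eT5, eT6, eT7, hdmu, hdLmu, hLmu, hdzC, hdLzC, hLzC]
      module
    rw [key]
    exact Submodule.add_mem _
      (Submodule.subset_span (by exact Or.inr ⟨i, l • nu + lam, condmu1, condmu2, rfl⟩))
      (Submodule.subset_span (by exact Or.inr ⟨i, l • nu + lam - (p - j) • D.α i, condC1, condC2, rfl⟩))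
end

section
/- For every lambda in a_Z* and every w in W0, the element |w∘(l*lambda - rho)> - det(w) |l*lambda - rho> of V belongs to I. (Straightening law on the shifted l-dilated lattice, generalizing equation (2.10) of the paper) -/
open Finsupp LaurentPolynomial

namespace RootDataAux

open RootData

variable {Λ W : Type} [AddCommGroup Λ] [Group W] [Fintype W]

lemma dot_dot (D : RootData Λ W) (u v : W) (mu : Λ) :
    D.dot u (D.dot v mu) = D.dot (u * v) mu := by
  simp only [RootData.dot, sub_add_cancel, map_mul, toAdd_mul, AddAut.add_apply]

lemma dot_one (D : RootData Λ W) (mu : Λ) : D.dot 1 mu = mu := by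
  simp [RootData.dot]

lemma pair_reflect (D : RootData Λ W) (i : Fin D.n) (nu : Λ) :
    D.pair i ((D.σ (D.s i)).toAdd nu) = - D.pair i nu := by
  rw [D.reflect]
  simp only [map_sub, map_zsmul, D.pair_alpha_self, smul_eq_mul]
  ring

lemma lemA (D : RootData Λ W) (l : ℕ) (lam : Λ) (u : W) (i : Fin D.n) :
    ket (D.dot (D.s i) ((D.σ u).toAdd (l • lam) - D.ρ)) + ket ((D.σ u).toAdd (l • lam) - D.ρ)
      ∈ D.Idl l := by
  set nu := (D.σ u).toAdd (l • lam) with hnu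
  have hpair : D.pair i nu = (D.pair i ((D.σ u).toAdd lam)) * l := by
    have h1 : nu = l • (D.σ u).toAdd lam := by rw [hnu, map_nsmul]
    rw [h1, map_nsmul, nsmul_eq_mul]; ring
  rcases le_or_gt 0 (D.pair i ((D.σ u).toAdd lam)) with h | h
  · apply Submodule.subset_span
    left; left
    exact ⟨i, nu - D.ρ, ⟨D.pair i ((D.σ u).toAdd lam), h, by rw [sub_add_cancel, hpair]⟩, rfl⟩
  · have hdd : D.dot (D.s i) (D.dot (D.s i) (nu - D.ρ)) = nu - D.ρ := by
      rw [dot_dot, D.s_sq, dot_one]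
    have hmem : ket (D.dot (D.s i) (D.dot (D.s i) (nu - D.ρ))) +
        ket (D.dot (D.s i) (nu - D.ρ)) ∈ D.Idl l := by
      apply Submodule.subset_span
      left; left
      refine ⟨i, D.dot (D.s i) (nu - D.ρ), ⟨-(D.pair i ((D.σ u).toAdd lam)), by omega, ?_⟩, rfl⟩
      have : D.dot (D.s i) (nu - D.ρ) + D.ρ = (D.σ (D.s i)).toAdd nu := by
        simp [RootData.dot]
      rw [this, pair_reflect, hpair]; ring
    rw [hdd] at hmem
    rw [add_comm]
    exact hmem

lemma key (D : RootData Λ W) (l : ℕ) (lam : Λ) (w : W) : ∀ u : W,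
    ket (D.dot w (D.dot u (l • lam - D.ρ))) -
      ((D.det w : ℤ) • ket (D.dot u (l • lam - D.ρ)) : V Λ) ∈ D.Idl l := by
  have hw : w ∈ Subgroup.closure (Set.range D.s) := by rw [D.gen_s]; trivial
  induction hw using Subgroup.closure_induction with
  | mem x hx =>
    intro u
    obtain ⟨i, rfl⟩ := hx
    have hform : D.dot u (l • lam - D.ρ) = (D.σ u).toAdd (l • lam) - D.ρ := by
      simp [RootData.dot]
    rw [hform, D.det_s]
    have := lemA D l lam u i
    convert this using 1
    push_cast
    rw [neg_smul, one_smul, sub_neg_eq_add]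
  | one =>
    intro u
    simp [dot_one]
  | mul x y hx hy ihx ihy =>
    intro u
    have h1 := ihx (y * u)
    have h2 := ihy u
    have h3 : ((D.det x : ℤ)) • (ket (D.dot y (D.dot u (l • lam - D.ρ))) -
        ((D.det y : ℤ) • ket (D.dot u (l • lam - D.ρ)) : V Λ)) ∈ D.Idl l :=
      zsmul_mem h2 _
    have := Submodule.add_mem _ h1 h3
    convert this using 1
    rw [dot_dot, dot_dot, dot_dot, ← mul_assoc, smul_sub, smul_smul, map_mul]
    push_cast
    abel
  | inv x hx ihx =>
    intro u
    have h1 := ihx (x⁻¹ * u)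
    rw [dot_dot, mul_inv_cancel_left] at h1
    have h2 : (-(D.det x : ℤ)) • (ket (D.dot u (l • lam - D.ρ)) -
        ((D.det x : ℤ) • ket (D.dot (x⁻¹ * u) (l • lam - D.ρ)) : V Λ)) ∈ D.Idl l :=
      zsmul_mem h1 _
    have hdet : (D.det x⁻¹ : ℤ) = (D.det x : ℤ) := by
      rcases Int.units_eq_one_or (D.det x) with h | h <;> simp [h]
    have hsq : (D.det x : ℤ) * (D.det x : ℤ) = 1 := by
      rcases Int.units_eq_one_or (D.det x) with h | h <;> simp [h]
    convert h2 using 1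
    rw [smul_sub, smul_smul, neg_mul, hsq, hdet, ← dot_dot]
    simp only [neg_smul, one_smul, sub_neg_eq_add]
    abel

end RootDataAux

/-- straightening law on the shifted `l`-dilated lattice,
generalizing equation (2.10) of the paper: for every `λ ∈ a_ℤ^*` and `w ∈ W₀`,
`|w∘(lλ - ρ)⟩ - det(w)|lλ - ρ⟩ ∈ I`. -/
theorem statement11 {Λ W : Type} [AddCommGroup Λ] [Group W] [Fintype W]
    (D : RootData Λ W) (l : ℕ) (hl : 0 < l) (lam : Λ) (w : W) :
    ket (D.dot w (l • lam - D.ρ)) - ((D.det w : ℤ) • ket (l • lam - D.ρ) : V Λ)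
      ∈ D.Idl l := by
  have := RootDataAux.key D l lam w (1 : W)
  simpa [RootDataAux.dot_one] using this
end
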